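/- arXiv:1804.08800 — 3 statements merged into one kernel-verified Lean document; each statement's English description precedes it below -/
import Mathlib

section
/- The function Ψ(z) = (1/(2π)) ∫_{-∞}^{0} log(1 + z e^{v}) √(-v) dv equals -(1/√(16π)) · Li_{5/2}(-z) for all real z > -1, where Li_{5/2} is the polylogarithm of order 5/2. -/
open Real MeasureTheory Set

/-- The polylogarithm of order 5/2 evaluated at `-z`, defined via its integral
representation `Li_{5/2}(-z) = -(1/Γ(5/2)) ∫_0^∞ t^{3/2} z e^{-t}/(1+z e^{-t}) dt`,
valid for `z > -1` by analytic continuation. -/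
noncomputable def Li52neg (z : ℝ) : ℝ :=
  -(1 / Real.Gamma (5/2)) *
    ∫ t in Set.Ioi (0:ℝ), t ^ ((3:ℝ)/2) * z * Real.exp (-t) / (1 + z * Real.exp (-t))

section aux
variable {z : ℝ}

lemma psi_m_pos (hz : -1 < z) : 0 < min 1 (1 + z) := lt_min one_pos (by linarith)

lemma psi_denom_ge (hz : -1 < z) {t : ℝ} (ht : 0 ≤ t) :
    min 1 (1 + z) ≤ 1 + z * Real.exp (-t) := by
  rcases le_or_gt 0 z with h | h
  · have : 0 ≤ z * Real.exp (-t) := mul_nonneg h (Real.exp_pos _).le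
    have h1 : min 1 (1+z) ≤ 1 := min_le_left _ _
    linarith
  · have he : Real.exp (-t) ≤ 1 := Real.exp_le_one_iff.mpr (by linarith)
    have h2 : z ≤ z * Real.exp (-t) := by nlinarith [Real.exp_pos (-t)]
    have h1 : min 1 (1+z) ≤ 1 + z := min_le_right _ _
    linarith

lemma psi_denom_pos (hz : -1 < z) {t : ℝ} (ht : 0 ≤ t) : 0 < 1 + z * Real.exp (-t) :=
  (psi_m_pos hz).trans_le (psi_denom_ge hz ht)

lemma psi_abs_log_le (hz : -1 < z) {t : ℝ} (ht : 0 ≤ t) :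
    |Real.log (1 + z * Real.exp (-t))| ≤ (|z| / min 1 (1+z)) * Real.exp (-t) := by
  set m := min 1 (1+z) with hmdef
  have hm : 0 < m := psi_m_pos hz
  set x := z * Real.exp (-t) with hxdef
  have hy : 0 < 1 + x := psi_denom_pos hz ht
  have hge : m ≤ 1 + x := psi_denom_ge hz ht
  have habs : (|z| / m) * Real.exp (-t) = |x| / m := by
    rw [hxdef, abs_mul, abs_of_pos (Real.exp_pos _)]; ring
  rw [habs, abs_le]
  constructor
  · have h1 : Real.log (1+x)⁻¹ ≤ (1+x)⁻¹ - 1 := Real.log_le_sub_one_of_pos (inv_pos.mpr hy)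
    rw [Real.log_inv] at h1
    have h2 : (1+x)⁻¹ - 1 = -x / (1+x) := by field_simp; ring
    rw [h2] at h1
    have h3 : -x / (1+x) ≤ |x| / m := by
      apply div_le_div₀ (abs_nonneg x) (neg_le_abs x) hm hge
    linarith
  · have h1 : Real.log (1+x) ≤ (1+x) - 1 := Real.log_le_sub_one_of_pos hy
    have h2 : x ≤ |x| / m := by
      calc x ≤ |x| := le_abs_self x
      _ ≤ |x| / m := by
          rw [le_div_iff₀ hm]
          nlinarith [abs_nonneg x, min_le_left 1 (1+z)]
    linarith

lemma psi_abs_frac_le (hz : -1 < z) {t : ℝ} (ht : 0 ≤ t) :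
    |z * Real.exp (-t) / (1 + z * Real.exp (-t))| ≤ (|z| / min 1 (1+z)) * Real.exp (-t) := by
  have hm : 0 < min 1 (1+z) := psi_m_pos hz
  have hy : 0 < 1 + z * Real.exp (-t) := psi_denom_pos hz ht
  rw [abs_div, abs_of_pos hy, abs_mul, abs_of_pos (Real.exp_pos _)]
  rw [div_le_iff₀ hy, div_mul_eq_mul_div, div_mul_eq_mul_div, le_div_iff₀ hm]
  have := psi_denom_ge hz ht
  nlinarith [abs_nonneg z, Real.exp_pos (-t), mul_nonneg (abs_nonneg z) (Real.exp_pos (-t)).le]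

end aux

/-- Ψ(z) = (1/(2π)) ∫_{-∞}^0 log(1 + z e^v) √(-v) dv = -(1/√(16π)) Li_{5/2}(-z)
for all real z > -1. -/
theorem psi_eq_polylog (z : ℝ) (hz : -1 < z) :
    (1 / (2 * π)) * ∫ v in Set.Iic (0:ℝ), Real.log (1 + z * Real.exp v) * Real.sqrt (-v) =
      -(1 / Real.sqrt (16 * π)) * Li52neg z := by
  have hπ : 0 < π := Real.pi_pos
  have hm : 0 < min 1 (1+z) := psi_m_pos hz
  set C : ℝ := |z| / min 1 (1+z) with hCdef
  have hC0 : 0 ≤ C := div_nonneg (abs_nonneg z) hm.le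
  set u : ℝ → ℝ := fun t => Real.log (1 + z * Real.exp (-t)) with hu_def
  set u' : ℝ → ℝ := fun t => -(z * Real.exp (-t)) / (1 + z * Real.exp (-t)) with hu'_def
  set v : ℝ → ℝ := fun t => (2/3) * t ^ ((3:ℝ)/2) with hv_def
  set v' : ℝ → ℝ := fun t => t ^ ((1:ℝ)/2) with hv'_def
  have hcont : Continuous (fun t : ℝ => 1 + z * Real.exp (-t)) := by continuity
  -- derivatives
  have hu : ∀ x ∈ Ioi (0:ℝ), HasDerivAt u (u' x) x := by
    intro x hx
    have hd : HasDerivAt (fun t : ℝ => 1 + z * Real.exp (-t)) (-(z * Real.exp (-x))) x := by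
      have h := (((Real.hasDerivAt_exp (-x)).comp x (hasDerivAt_neg x)).const_mul z).const_add 1
      exact h.congr_deriv (by ring)
    exact hd.log (psi_denom_pos hz (le_of_lt hx)).ne'
  have hv : ∀ x ∈ Ioi (0:ℝ), HasDerivAt v (v' x) x := by
    intro x hx
    have h := (Real.hasDerivAt_rpow_const (p := (3:ℝ)/2) (Or.inl (ne_of_gt hx))).const_mul
      ((2:ℝ)/3)
    refine h.congr_deriv ?_
    rw [show (3:ℝ)/2 - 1 = 1/2 by norm_num]
    ring
  -- continuity facts
  have hulog : ∀ x : ℝ, 0 ≤ x → ContinuousAt u x := by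
    intro x hx
    exact ContinuousAt.log hcont.continuousAt (psi_denom_pos hz hx).ne'
  -- integrability
  have hint1 : IntegrableOn (fun t : ℝ => Real.exp (-t) * t ^ ((1:ℝ)/2)) (Ioi 0) := by
    have := Real.GammaIntegral_convergent (s := 3/2) (by norm_num)
    simpa [show (3:ℝ)/2 - 1 = 1/2 by norm_num] using this
  have hint2 : IntegrableOn (fun t : ℝ => Real.exp (-t) * t ^ ((3:ℝ)/2)) (Ioi 0) := by
    have := Real.GammaIntegral_convergent (s := 5/2) (by norm_num)
    simpa [show (5:ℝ)/2 - 1 = 3/2 by norm_num] using this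
  have huv' : IntegrableOn (u * v') (Ioi 0) := by
    apply Integrable.mono' (hint1.const_mul C)
    · apply ContinuousOn.aestronglyMeasurable _ measurableSet_Ioi
      intro x hx
      exact ((hulog x (le_of_lt hx)).mul
        (Real.continuousAt_rpow_const x _ (Or.inl (ne_of_gt hx)))).continuousWithinAt
    · filter_upwards [ae_restrict_mem measurableSet_Ioi] with t ht
      have ht0 : (0:ℝ) ≤ t := le_of_lt ht
      have h1 := psi_abs_log_le hz ht0
      have h2 : (0:ℝ) ≤ t ^ ((1:ℝ)/2) := Real.rpow_nonneg ht0 _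
      calc ‖u t * v' t‖ = |u t| * (t ^ ((1:ℝ)/2)) := by
            rw [norm_mul, Real.norm_eq_abs, Real.norm_eq_abs, abs_of_nonneg h2]
      _ ≤ (C * Real.exp (-t)) * t ^ ((1:ℝ)/2) := by
            apply mul_le_mul_of_nonneg_right h1 h2
      _ = C * (Real.exp (-t) * t ^ ((1:ℝ)/2)) := by ring
  have hu'v : IntegrableOn (u' * v) (Ioi 0) := by
    apply Integrable.mono' ((hint2.const_mul C).const_mul (2/3))
    · apply ContinuousOn.aestronglyMeasurable _ measurableSet_Ioi
      intro x hx
      have hfrac : ContinuousAt u' x := by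
        exact (((Real.continuous_exp.comp continuous_neg).continuousAt.const_mul z).neg.div hcont.continuousAt
          (psi_denom_pos hz (le_of_lt hx)).ne')
      exact (hfrac.mul
        ((Real.continuousAt_rpow_const x _ (Or.inl (ne_of_gt hx))).const_mul _)).continuousWithinAt
    · filter_upwards [ae_restrict_mem measurableSet_Ioi] with t ht
      have ht0 : (0:ℝ) ≤ t := le_of_lt ht
      have h1 := psi_abs_frac_le hz ht0
      have h1' : |u' t| ≤ C * Real.exp (-t) := by
        rw [hu'_def]
        simpa [neg_div, abs_neg] using h1
      have h2 : (0:ℝ) ≤ t ^ ((3:ℝ)/2) := Real.rpow_nonneg ht0 _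
      calc ‖u' t * v t‖ = |u' t| * ((2/3) * t ^ ((3:ℝ)/2)) := by
            rw [norm_mul, Real.norm_eq_abs, Real.norm_eq_abs,
              abs_of_nonneg (by positivity : (0:ℝ) ≤ 2/3 * t ^ ((3:ℝ)/2))]
      _ ≤ (C * Real.exp (-t)) * ((2/3) * t ^ ((3:ℝ)/2)) := by
            apply mul_le_mul_of_nonneg_right h1' (by positivity)
      _ = 2/3 * (C * (Real.exp (-t) * t ^ ((3:ℝ)/2))) := by ring
  -- boundary limits
  have h_zero : Filter.Tendsto (u * v) (nhdsWithin 0 (Ioi 0)) (nhds 0) := by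
    have hv0 : ContinuousAt v 0 :=
      (Real.continuousAt_rpow_const 0 _ (Or.inr (by norm_num))).const_mul _
    have hval : (u * v) 0 = 0 := by
      simp [hu_def, hv_def, Real.zero_rpow (by norm_num : ((3:ℝ)/2) ≠ 0)]
    have htend : Filter.Tendsto (u * v) (nhds 0) (nhds ((u * v) 0)) :=
      ((hulog 0 le_rfl).mul hv0).tendsto
    rw [hval] at htend
    exact htend.mono_left nhdsWithin_le_nhds
  have h_infty : Filter.Tendsto (u * v) Filter.atTop (nhds 0) := by
    apply squeeze_zero_norm' (a := fun t => (2/3 * C) * (t ^ ((3:ℝ)/2) * Real.exp (-(1:ℝ) * t)))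
    · filter_upwards [Filter.eventually_ge_atTop (0:ℝ)] with t ht
      have h1 := psi_abs_log_le hz ht
      have h2 : (0:ℝ) ≤ t ^ ((3:ℝ)/2) := Real.rpow_nonneg ht _
      calc ‖(u * v) t‖ = |u t| * ((2/3) * t ^ ((3:ℝ)/2)) := by
            rw [Pi.mul_apply, norm_mul, Real.norm_eq_abs, Real.norm_eq_abs,
              abs_of_nonneg (by positivity : (0:ℝ) ≤ 2/3 * t ^ ((3:ℝ)/2))]
      _ ≤ (C * Real.exp (-t)) * ((2/3) * t ^ ((3:ℝ)/2)) := by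
            apply mul_le_mul_of_nonneg_right h1 (by positivity)
      _ = (2/3 * C) * (t ^ ((3:ℝ)/2) * Real.exp (-(1:ℝ) * t)) := by
            rw [neg_one_mul]; ring
    · simpa using
        (tendsto_rpow_mul_exp_neg_mul_atTop_nhds_zero ((3:ℝ)/2) 1 one_pos).const_mul (2/3 * C)
  -- integration by parts
  have hibp := integral_Ioi_mul_deriv_eq_deriv_mul hu hv huv' hu'v h_zero h_infty
  -- change of variables on the LHS
  have h1 : (∫ w in Set.Iic (0:ℝ), Real.log (1 + z * Real.exp w) * Real.sqrt (-w))
      = ∫ t in Set.Ioi (0:ℝ), u t * v' t := by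
    have h := integral_comp_neg_Ioi (0:ℝ)
      (fun w => Real.log (1 + z * Real.exp w) * Real.sqrt (-w))
    rw [neg_zero] at h
    rw [← h]
    apply setIntegral_congr_fun measurableSet_Ioi
    intro t ht
    simp only [neg_neg, hu_def, hv'_def]
    rw [Real.sqrt_eq_rpow]
  -- rewrite the u'v integral
  have h2 : (∫ t in Set.Ioi (0:ℝ), u' t * v t)
      = -(2/3) * ∫ t in Set.Ioi (0:ℝ),
          t ^ ((3:ℝ)/2) * z * Real.exp (-t) / (1 + z * Real.exp (-t)) := by
    rw [← integral_const_mul]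
    apply setIntegral_congr_fun measurableSet_Ioi
    intro t ht
    simp only [hu'_def, hv_def]
    ring
  rw [h1, hibp, h2, Li52neg]
  -- final arithmetic
  have hsqrt16 : Real.sqrt (16 * π) = 4 * Real.sqrt π := by
    rw [show (16:ℝ) * π = (4:ℝ)^2 * π by norm_num, Real.sqrt_mul (by positivity),
      Real.sqrt_sq (by norm_num)]
  have hGamma : Real.Gamma (5/2) = (3/4) * Real.sqrt π := by
    rw [show (5:ℝ)/2 = 3/2 + 1 by norm_num, Real.Gamma_add_one (by norm_num),
      show (3:ℝ)/2 = 1/2 + 1 by norm_num, Real.Gamma_add_one (by norm_num),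
      Real.Gamma_one_half_eq]
    ring
  rw [hsqrt16, hGamma]
  have hS : 0 < Real.sqrt π := Real.sqrt_pos.mpr hπ
  have hS2 : Real.sqrt π * Real.sqrt π = π := Real.mul_self_sqrt hπ.le
  set I := ∫ t in Set.Ioi (0:ℝ),
      t ^ ((3:ℝ)/2) * z * Real.exp (-t) / (1 + z * Real.exp (-t)) with hI
  field_simp
  linear_combination 2 * I * hS2
end

section
/- With the substitution y = -W(-e^v) applied to each branch of the Lambert function, one has (1/(2π)) ∫_{-∞}^{-1} log(1 + z e^v)(√(-W_{-1}(-e^v)) - √(-W_0(-e^v))) dv = (1/(2π)) ∫_0^∞ (1 - 1/y) log(1 + z y e^{-y}) √y dy, for all real z ≥ 0. -/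
open Real Set MeasureTheory

noncomputable def phi (y : ℝ) : ℝ := Real.log y - y

lemma phi_deriv {y : ℝ} (hy : 0 < y) {s : Set ℝ} : HasDerivWithinAt phi (y⁻¹ - 1) s y :=
  ((Real.hasDerivAt_log hy.ne').sub (hasDerivAt_id y)).hasDerivWithinAt

lemma exp_phi {y : ℝ} (hy : 0 < y) : Real.exp (phi y) = y * Real.exp (-y) := by
  rw [phi, Real.exp_sub, Real.exp_log hy, div_eq_mul_inv, Real.exp_neg]

lemma phi_one : phi 1 = -1 := by simp [phi]

lemma phi_mono : StrictMonoOn phi (Ioc 0 1) := by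
  apply strictMonoOn_of_deriv_pos (convex_Ioc 0 1)
  · exact fun y hy => ((Real.continuousAt_log (ne_of_gt hy.1)).continuousWithinAt.sub
      continuousWithinAt_id)
  · intro y hy
    rw [interior_Ioc] at hy
    rw [(phi_deriv hy.1 (s := univ)).hasDerivAt (by simp)  |>.deriv]
    simp only [sub_pos]
    rw [lt_inv_comm₀ one_pos hy.1]; simpa using hy.2
    
lemma phi_anti : StrictAntiOn phi (Ici 1) := by
  apply strictAntiOn_of_deriv_neg (convex_Ici 1)
  · intro y hy
    have h1 : (0:ℝ) < y := lt_of_lt_of_le one_pos hy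
    exact ((Real.continuousAt_log h1.ne').continuousWithinAt.sub continuousWithinAt_id)
  · intro y hy
    rw [interior_Ici] at hy
    have h1 : (0:ℝ) < y := lt_trans one_pos hy
    rw [(phi_deriv h1 (s := univ)).hasDerivAt (by simp) |>.deriv]
    simp only [sub_neg]
    rw [inv_lt_one₀ h1]  -- maybe wrong name
    exact hy

lemma phi_image_Ioo : phi '' Ioo 0 1 = Iio (-1) := by
  apply Subset.antisymm
  · rintro _ ⟨y, hy, rfl⟩
    have := phi_mono ⟨hy.1, hy.2.le⟩ (by constructor <;> norm_num) hy.2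
    rw [phi_one] at this; exact this
  · intro v hv
    rw [mem_Iio] at hv
    have ha0 : (0:ℝ) < Real.exp v := Real.exp_pos v
    have ha1 : Real.exp v < 1 := Real.exp_lt_one_iff.mpr (by linarith)
    have hcont : ContinuousOn phi (Icc (Real.exp v) 1) := by
      intro y hy
      exact ((Real.continuousAt_log (lt_of_lt_of_le ha0 hy.1).ne').continuousWithinAt.sub
        continuousWithinAt_id)
    have key := intermediate_value_Icc ha1.le hcont
    have hmem : v ∈ Icc (phi (Real.exp v)) (phi 1) := by
      rw [phi_one]
      constructor
      · rw [phi, Real.log_exp]; linarith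
      · linarith
    obtain ⟨y, hy, hyv⟩ := key hmem
    refine ⟨y, ⟨lt_of_lt_of_le ha0 hy.1, lt_of_le_of_ne hy.2 ?_⟩, hyv⟩
    rintro rfl
    rw [phi_one] at hyv; linarith

lemma phi_image_Ioi : phi '' Ioi 1 = Iio (-1) := by
  apply Subset.antisymm
  · rintro _ ⟨y, hy, rfl⟩
    have := phi_anti (mem_Ici.mpr le_rfl) (mem_Ici.mpr (le_of_lt hy)) hy
    rw [phi_one] at this; exact this
  · intro v hv
    rw [mem_Iio] at hv
    set b := max 16 (-2*v) with hb
    have hb16 : (16:ℝ) ≤ b := le_max_left _ _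
    have hb1 : (1:ℝ) ≤ b := by linarith
    have hbv : -2*v ≤ b := le_max_right _ _
    have hb0 : (0:ℝ) < b := by linarith
    have hsq : (4:ℝ) ≤ Real.sqrt b := by
      have : Real.sqrt 16 ≤ Real.sqrt b := Real.sqrt_le_sqrt hb16
      rwa [show (16:ℝ) = 4^2 by norm_num, Real.sqrt_sq (by norm_num)] at this
    have hlogb : Real.log b ≤ b / 2 := by
      have h1 : Real.log (Real.sqrt b) ≤ Real.sqrt b - 1 :=
        Real.log_le_sub_one_of_pos (by positivity)
      rw [Real.log_sqrt hb0.le] at h1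
      nlinarith [Real.sq_sqrt hb0.le]
    have hphib : phi b ≤ v := by
      rw [phi]; nlinarith
    have hcont : ContinuousOn phi (Icc 1 b) := by
      intro y hy
      exact ((Real.continuousAt_log (lt_of_lt_of_le one_pos hy.1).ne').continuousWithinAt.sub
        continuousWithinAt_id)
    have key := intermediate_value_Icc' hb1 hcont
    have hmem : v ∈ Icc (phi b) (phi 1) := by
      rw [phi_one]; exact ⟨hphib, hv.le⟩
    obtain ⟨y, hy, hyv⟩ := key hmem
    refine ⟨y, lt_of_le_of_ne hy.1 ?_, hyv⟩
    rintro rfl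
    rw [phi_one] at hyv; linarith

lemma texp_mono : StrictMonoOn (fun t => t * Real.exp t) (Ici (-1 : ℝ)) := by
  apply strictMonoOn_of_deriv_pos (convex_Ici _)
  · exact (continuous_id.mul Real.continuous_exp).continuousOn
  · intro t ht
    rw [interior_Ici] at ht
    have : HasDerivAt (fun t => t * Real.exp t) (1 * Real.exp t + t * Real.exp t) t :=
      (hasDerivAt_id t).mul (Real.hasDerivAt_exp t)
    rw [this.deriv, mem_Ioi] at *
    nlinarith [mul_pos (by linarith : (0:ℝ) < 1 + t) (Real.exp_pos t)]

lemma texp_anti : StrictAntiOn (fun t => t * Real.exp t) (Iic (-1 : ℝ)) := by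
  apply strictAntiOn_of_deriv_neg (convex_Iic _)
  · exact (continuous_id.mul Real.continuous_exp).continuousOn
  · intro t ht
    rw [interior_Iic] at ht
    have : HasDerivAt (fun t => t * Real.exp t) (1 * Real.exp t + t * Real.exp t) t :=
      (hasDerivAt_id t).mul (Real.hasDerivAt_exp t)
    rw [this.deriv, mem_Iio] at *
    nlinarith [mul_pos (by linarith : (0:ℝ) < -1 - t) (Real.exp_pos t)]

lemma W0_eq (W0 : ℝ → ℝ)
    (hW0 : ∀ x ∈ Ico (-Real.exp (-1)) (0:ℝ), W0 x * Real.exp (W0 x) = x ∧ W0 x ∈ Ico (-1:ℝ) 0)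
    {y : ℝ} (hy : y ∈ Ioc (0:ℝ) 1) : W0 (-(y * Real.exp (-y))) = -y := by
  set x := -(y * Real.exp (-y)) with hx
  have hylog : Real.log y - y ≤ -1 := by
    have := Real.log_le_sub_one_of_pos hy.1
    linarith
  have hpos : 0 < y * Real.exp (-y) := mul_pos hy.1 (Real.exp_pos _)
  have hxmem : x ∈ Ico (-Real.exp (-1)) (0:ℝ) := by
    constructor
    · rw [hx, neg_le_neg_iff]
      calc y * Real.exp (-y) = Real.exp (phi y) := (exp_phi hy.1).symm
        _ ≤ Real.exp (-1) := Real.exp_le_exp.mpr hylog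
    · rw [hx]; linarith
  obtain ⟨heq, hmem⟩ := hW0 x hxmem
  have h2 : (-y) * Real.exp (-y) = x := by rw [hx]; ring
  exact texp_mono.injOn (mem_Ici.mpr hmem.1)
    (mem_Ici.mpr (by linarith [hy.2] : (-1:ℝ) ≤ -y)) (heq.trans h2.symm)

lemma Wm1_eq (Wm1 : ℝ → ℝ)
    (hWm1 : ∀ x ∈ Ico (-Real.exp (-1)) (0:ℝ), Wm1 x * Real.exp (Wm1 x) = x ∧ Wm1 x ≤ -1)
    {y : ℝ} (hy : y ∈ Ici (1:ℝ)) : Wm1 (-(y * Real.exp (-y))) = -y := by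
  have hy0 : (0:ℝ) < y := lt_of_lt_of_le one_pos hy
  set x := -(y * Real.exp (-y)) with hx
  have hylog : Real.log y - y ≤ -1 := by
    have := Real.log_le_sub_one_of_pos hy0
    linarith
  have hpos : 0 < y * Real.exp (-y) := mul_pos hy0 (Real.exp_pos _)
  have hxmem : x ∈ Ico (-Real.exp (-1)) (0:ℝ) := by
    constructor
    · rw [hx, neg_le_neg_iff]
      calc y * Real.exp (-y) = Real.exp (phi y) := (exp_phi hy0).symm
        _ ≤ Real.exp (-1) := Real.exp_le_exp.mpr hylog
    · rw [hx]; linarith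
  obtain ⟨heq, hmem⟩ := hWm1 x hxmem
  have h2 : (-y) * Real.exp (-y) = x := by rw [hx]; ring
  exact texp_anti.injOn (mem_Iic.mpr hmem)
    (mem_Iic.mpr (by linarith [mem_Ici.mp hy] : -y ≤ (-1:ℝ))) (heq.trans h2.symm)

lemma log_one_add_nonneg {t : ℝ} (ht : 0 ≤ t) : 0 ≤ Real.log (1 + t) :=
  Real.log_nonneg (by linarith)

lemma log_one_add_le {t : ℝ} (ht : 0 ≤ t) : Real.log (1 + t) ≤ t := by
  have := Real.log_le_sub_one_of_pos (show (0:ℝ) < 1 + t by linarith)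
  linarith

lemma h_meas (z : ℝ) :
    Measurable (fun y : ℝ => (1 - 1/y) * Real.log (1 + z * y * Real.exp (-y)) * Real.sqrt y) := by
  apply Measurable.mul
  apply Measurable.mul
  · exact measurable_const.sub (measurable_const.div measurable_id)
  · exact Real.measurable_log.comp
      (measurable_const.add ((measurable_const.mul measurable_id).mul (measurable_id.neg.exp)))
  · exact Real.continuous_sqrt.measurable

lemma h_int_Ioo (z : ℝ) (hz : 0 ≤ z) :
    IntegrableOn (fun y : ℝ => (1 - 1/y) * Real.log (1 + z * y * Real.exp (-y)) * Real.sqrt y)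
      (Ioo (0:ℝ) 1) := by
  apply Integrable.mono' (g := fun _ : ℝ => z)
  · exact integrableOn_const measure_Ioo_lt_top.ne
  · exact (h_meas z).aestronglyMeasurable
  · rw [ae_restrict_iff' measurableSet_Ioo]
    filter_upwards with y hy
    have hy0 := hy.1
    have hy1 := hy.2
    have ht : 0 ≤ z * y * Real.exp (-y) := by positivity
    have hL0 := log_one_add_nonneg ht
    have hLt := log_one_add_le ht
    have hinv : 1 ≤ 1/y := by rw [le_div_iff₀ hy0]; linarith
    have h1 : |1 - 1/y| = 1/y - 1 := by rw [abs_of_nonpos (by linarith)]; ring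
    have hs0 : 0 ≤ Real.sqrt y := Real.sqrt_nonneg y
    have hs1 : Real.sqrt y ≤ 1 := Real.sqrt_le_iff.mpr ⟨zero_le_one, by nlinarith⟩
    have hey : Real.exp (-y) ≤ 1 := Real.exp_le_one_iff.mpr (by linarith)
    rw [Real.norm_eq_abs, abs_mul, abs_mul, h1, abs_of_nonneg hL0, abs_of_nonneg hs0]
    calc (1/y - 1) * Real.log (1 + z * y * Real.exp (-y)) * Real.sqrt y
        ≤ (1/y) * (z * y * Real.exp (-y)) * 1 := by
          apply mul_le_mul _ hs1 hs0 (by positivity)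
          exact mul_le_mul (by linarith) hLt hL0 (by positivity)
      _ = z * Real.exp (-y) := by field_simp
      _ ≤ z * 1 := mul_le_mul_of_nonneg_left hey hz
      _ = z := mul_one z

lemma h_int_Ioi (z : ℝ) (hz : 0 ≤ z) :
    IntegrableOn (fun y : ℝ => (1 - 1/y) * Real.log (1 + z * y * Real.exp (-y)) * Real.sqrt y)
      (Ioi (1:ℝ)) := by
  have hg : IntegrableOn (fun y : ℝ => z * (Real.exp (-y) * y ^ ((3:ℝ) - 1))) (Ioi 1) :=
    ((Real.GammaIntegral_convergent (by norm_num : (0:ℝ) < 3)).mono_set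
      (Ioi_subset_Ioi zero_le_one)).const_mul z
  apply Integrable.mono' hg
  · exact (h_meas z).aestronglyMeasurable
  · rw [ae_restrict_iff' measurableSet_Ioi]
    filter_upwards with y hy
    rw [mem_Ioi] at hy
    have hy0 : (0:ℝ) < y := lt_trans one_pos hy
    have ht : 0 ≤ z * y * Real.exp (-y) := by positivity
    have hL0 := log_one_add_nonneg ht
    have hLt := log_one_add_le ht
    have hinv : 1/y ≤ 1 := by rw [div_le_one hy0]; linarith
    have hinv0 : 0 ≤ 1/y := by positivity
    have h1 : |1 - 1/y| ≤ 1 := by rw [abs_of_nonneg (by linarith)]; linarith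
    have hs0 : 0 ≤ Real.sqrt y := Real.sqrt_nonneg y
    have hsy : Real.sqrt y ≤ y := Real.sqrt_le_iff.mpr ⟨hy0.le, by nlinarith⟩
    have hpow : y ^ ((3:ℝ) - 1) = y * y := by
      rw [show (3:ℝ) - 1 = ((2:ℕ):ℝ) by norm_num, Real.rpow_natCast]; ring
    rw [Real.norm_eq_abs, abs_mul, abs_mul, abs_of_nonneg hL0, abs_of_nonneg hs0]
    calc |1 - 1/y| * Real.log (1 + z * y * Real.exp (-y)) * Real.sqrt y
        ≤ 1 * (z * y * Real.exp (-y)) * y := by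
          apply mul_le_mul _ hsy hs0 (by positivity)
          exact mul_le_mul h1 hLt hL0 zero_le_one
      _ = z * (Real.exp (-y) * y ^ ((3:ℝ) - 1)) := by rw [hpow]; ring

/-- Under the substitution `y = -W(-e^v)` applied to each real branch of the
Lambert W function (`W_0` with range `[-1,0)` and `W_{-1}` with range `(-∞,-1]`
on `[-1/e, 0)`), one has for all real `z ≥ 0`:
`(1/(2π)) ∫_{-∞}^{-1} log(1+z e^v)(√(-W_{-1}(-e^v)) - √(-W_0(-e^v))) dv
  = (1/(2π)) ∫_0^∞ (1 - 1/y) log(1 + z y e^{-y}) √y dy`. -/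
theorem lambert_substitution (W0 Wm1 : ℝ → ℝ)
    (hW0 : ∀ x ∈ Ico (-Real.exp (-1)) (0:ℝ), W0 x * Real.exp (W0 x) = x ∧ W0 x ∈ Ico (-1:ℝ) 0)
    (hWm1 : ∀ x ∈ Ico (-Real.exp (-1)) (0:ℝ), Wm1 x * Real.exp (Wm1 x) = x ∧ Wm1 x ≤ -1)
    (z : ℝ) (hz : 0 ≤ z) :
    (1 / (2 * π)) * ∫ v in Iic (-1 : ℝ), Real.log (1 + z * Real.exp v) *
        (Real.sqrt (-(Wm1 (-Real.exp v))) - Real.sqrt (-(W0 (-Real.exp v)))) =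
      (1 / (2 * π)) *
        ∫ y in Ioi (0:ℝ), (1 - 1/y) * Real.log (1 + z * y * Real.exp (-y)) * Real.sqrt y := by
  congr 1
  set h : ℝ → ℝ := fun y => (1 - 1/y) * Real.log (1 + z * y * Real.exp (-y)) * Real.sqrt y
    with hh
  set g0 : ℝ → ℝ := fun v => Real.log (1 + z * Real.exp v) * Real.sqrt (-(W0 (-Real.exp v)))
    with hg0
  set g1 : ℝ → ℝ := fun v => Real.log (1 + z * Real.exp v) * Real.sqrt (-(Wm1 (-Real.exp v)))
    with hg1
  have inj0 : InjOn phi (Ioo 0 1) := phi_mono.injOn.mono Ioo_subset_Ioc_self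
  have inj1 : InjOn phi (Ioi 1) := phi_anti.injOn.mono Ioi_subset_Ici_self
  have d0 : ∀ y ∈ Ioo (0:ℝ) 1, HasDerivWithinAt phi (y⁻¹ - 1) (Ioo 0 1) y :=
    fun y hy => phi_deriv hy.1
  have d1 : ∀ y ∈ Ioi (1:ℝ), HasDerivWithinAt phi (y⁻¹ - 1) (Ioi 1) y :=
    fun y hy => phi_deriv (lt_trans one_pos hy)
  have e0 : ∀ y ∈ Ioo (0:ℝ) 1, |y⁻¹ - 1| • g0 (phi y) = -h y := by
    intro y hy
    have hy0 := hy.1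
    have habs : |y⁻¹ - 1| = y⁻¹ - 1 := by
      rw [abs_of_nonneg]
      rw [sub_nonneg, one_le_inv_iff₀]
      exact ⟨hy0, hy.2.le⟩
    rw [hg0]
    simp only [exp_phi hy0, W0_eq W0 hW0 ⟨hy0, hy.2.le⟩, neg_neg, habs, smul_eq_mul, hh]
    ring
  have e1 : ∀ y ∈ Ioi (1:ℝ), |y⁻¹ - 1| • g1 (phi y) = h y := by
    intro y hy
    rw [mem_Ioi] at hy
    have hy0 : (0:ℝ) < y := lt_trans one_pos hy
    have habs : |y⁻¹ - 1| = 1 - y⁻¹ := by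
      rw [abs_of_nonpos]
      · ring
      · rw [sub_nonpos, inv_le_one₀ hy0]; exact hy.le
    rw [hg1]
    simp only [exp_phi hy0, Wm1_eq Wm1 hWm1 (mem_Ici.mpr hy.le), neg_neg, habs, smul_eq_mul, hh]
    ring
  have cov0 : ∫ v in Iio (-1:ℝ), g0 v = ∫ y in Ioo (0:ℝ) 1, -h y := by
    rw [← phi_image_Ioo, integral_image_eq_integral_abs_deriv_smul measurableSet_Ioo d0 inj0]
    exact setIntegral_congr_fun measurableSet_Ioo e0
  have cov1 : ∫ v in Iio (-1:ℝ), g1 v = ∫ y in Ioi (1:ℝ), h y := by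
    rw [← phi_image_Ioi, integral_image_eq_integral_abs_deriv_smul measurableSet_Ioi d1 inj1]
    exact setIntegral_congr_fun measurableSet_Ioi e1
  have int_h0 : IntegrableOn h (Ioo (0:ℝ) 1) := h_int_Ioo z hz
  have int_h1 : IntegrableOn h (Ioi (1:ℝ)) := h_int_Ioi z hz
  have int_g0 : IntegrableOn g0 (Iio (-1:ℝ)) := by
    rw [← phi_image_Ioo,
      integrableOn_image_iff_integrableOn_abs_deriv_smul measurableSet_Ioo d0 inj0]
    exact IntegrableOn.congr_fun int_h0.neg (fun y hy => (e0 y hy).symm) measurableSet_Ioo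
  have int_g1 : IntegrableOn g1 (Iio (-1:ℝ)) := by
    rw [← phi_image_Ioi,
      integrableOn_image_iff_integrableOn_abs_deriv_smul measurableSet_Ioi d1 inj1]
    exact int_h1.congr_fun (fun y hy => (e1 y hy).symm) measurableSet_Ioi
  calc ∫ v in Iic (-1:ℝ), Real.log (1 + z * Real.exp v) *
        (Real.sqrt (-(Wm1 (-Real.exp v))) - Real.sqrt (-(W0 (-Real.exp v))))
      = ∫ v in Iio (-1:ℝ), (g1 v - g0 v) := by
        rw [integral_Iic_eq_integral_Iio]
        exact setIntegral_congr_fun measurableSet_Iio (fun v _ => by rw [hg0, hg1]; ring)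
    _ = (∫ v in Iio (-1:ℝ), g1 v) - ∫ v in Iio (-1:ℝ), g0 v := integral_sub int_g1 int_g0
    _ = (∫ y in Ioi (1:ℝ), h y) + ∫ y in Ioo (0:ℝ) 1, h y := by
        rw [cov0, cov1, integral_neg]; ring
    _ = (∫ y in Ioc (0:ℝ) 1, h y) + ∫ y in Ioi (1:ℝ), h y := by
        rw [integral_Ioc_eq_integral_Ioo]; ring
    _ = ∫ y in Ioi (0:ℝ), h y := by
        rw [← setIntegral_union Ioc_disjoint_Ioi_same measurableSet_Ioi
          (Iff.mpr integrableOn_Ioc_iff_integrableOn_Ioo int_h0) int_h1,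
          Ioc_union_Ioi_eq_Ioi zero_le_one]
end

section
/- Let ρ: (-∞, 0] → ℝ be ρ(a) = √(-a)/(2π) and define Ψ(z) = ∫_{-∞}^0 log(1 + z e^a) ρ(a) da for z ≥ 0. Then Ψ(z) / (log z)^{5/2} → 2/(15π) as z → ∞. -/
open Real Set MeasureTheory Filter

set_option maxHeartbeats 1000000

lemma lemA' {L : ℝ} (hL : 0 ≤ L) :
    ∫ t in (0:ℝ)..L, (L - t) * Real.sqrt t = 4/15 * (L^2 * Real.sqrt L) := by
  have h : ∫ t in (0:ℝ)..L, (L - t) * Real.sqrt t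
      = (fun t : ℝ => 2/3 * L * (t * Real.sqrt t) - 2/5 * (t^2 * Real.sqrt t)) L
        - (fun t : ℝ => 2/3 * L * (t * Real.sqrt t) - 2/5 * (t^2 * Real.sqrt t)) 0 := by
    apply intervalIntegral.integral_eq_sub_of_hasDeriv_right_of_le (f := fun t : ℝ => 2/3 * L * (t * Real.sqrt t) - 2/5 * (t^2 * Real.sqrt t)) (f' := fun t => (L - t) * Real.sqrt t) hL
    · fun_prop
    · intro x hx
      have hx0 : x ≠ 0 := ne_of_gt hx.1
      have hs : HasDerivAt Real.sqrt (1 / (2 * Real.sqrt x)) x := Real.hasDerivAt_sqrt hx0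
      have hsx : Real.sqrt x ≠ 0 := Real.sqrt_ne_zero'.mpr hx.1
      have h1 : HasDerivAt (fun t : ℝ => 2/3 * L * (t * Real.sqrt t))
          (2/3 * L * (1 * Real.sqrt x + x * (1 / (2 * Real.sqrt x)))) x :=
        ((hasDerivAt_id x).mul hs).const_mul (2/3 * L)
      have h2 : HasDerivAt (fun t : ℝ => 2/5 * (t^2 * Real.sqrt t))
          (2/5 * ((2 * x ^ 1) * Real.sqrt x + x^2 * (1 / (2 * Real.sqrt x)))) x := by
        have := ((hasDerivAt_pow 2 x).mul hs).const_mul (2/5 : ℝ)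
        simpa using this
      apply HasDerivAt.hasDerivWithinAt
      have h3 := h1.sub h2
      convert h3 using 1
      · rfl
      obtain ⟨s, hs0, rfl⟩ : ∃ s : ℝ, 0 < s ∧ s^2 = x :=
        ⟨Real.sqrt x, Real.sqrt_pos.mpr hx.1, Real.sq_sqrt hx.1.le⟩
      rw [Real.sqrt_sq hs0.le]
      field_simp
      ring
    · apply ContinuousOn.intervalIntegrable
      fun_prop
  rw [h]
  simp only [Real.sqrt_zero]
  ring


lemma lemD' (u : ℝ) :
    0 ≤ Real.log (1 + Real.exp u) - max u 0 ∧
    Real.log (1 + Real.exp u) - max u 0 ≤ Real.exp (-|u|) := by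
  have hlog : ∀ v : ℝ, 0 ≤ Real.log (1 + Real.exp v) ∧ Real.log (1 + Real.exp v) ≤ Real.exp v := by
    intro v
    constructor
    · exact Real.log_nonneg (by linarith [Real.exp_pos v])
    · have := Real.log_le_sub_one_of_pos (x := 1 + Real.exp v) (by positivity)
      linarith
  rcases le_or_gt u 0 with hu | hu
  · rw [max_eq_right hu, abs_of_nonpos hu, neg_neg]
    simpa using hlog u
  · rw [max_eq_left hu.le, abs_of_pos hu]
    have key : Real.log (1 + Real.exp u) = u + Real.log (1 + Real.exp (-u)) := by
      have h1 : (1:ℝ) + Real.exp u = Real.exp u * (1 + Real.exp (-u)) := by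
        rw [mul_add, mul_one, ← Real.exp_add]; simp [add_comm]
      rw [h1, Real.log_mul (Real.exp_ne_zero _) (by positivity), Real.log_exp]
    rw [key]
    have := hlog (-u)
    constructor <;> linarith [this.1, this.2]

lemma sqrt_le_one_add' (t : ℝ) (ht : 0 ≤ t) : Real.sqrt t ≤ 1 + t := by
  nlinarith [Real.sq_sqrt ht, Real.sqrt_nonneg t, sq_nonneg (Real.sqrt t - 1)]

section
variable {L : ℝ}

lemma cont_f : Continuous (fun t : ℝ => Real.log (1 + Real.exp (L - t)) * Real.sqrt t) := by
  have h : Continuous fun t : ℝ => (1 : ℝ) + Real.exp (L - t) := by fun_prop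
  exact (h.log (fun x => by positivity)).mul Real.continuous_sqrt

lemma intOn_exp_mul0 : IntegrableOn (fun t : ℝ => Real.exp (-t) * (1 + t)) (Ioi 0) := by
  have h1 : IntegrableOn (fun t : ℝ => Real.exp (-t)) (Ioi 0) := by
    simpa using exp_neg_integrableOn_Ioi 0 (by norm_num : (0:ℝ) < 1)
  have h2 : IntegrableOn (fun t : ℝ => Real.exp (-t) * t) (Ioi 0) := by
    have := Real.GammaIntegral_convergent (by norm_num : (0:ℝ) < 2)
    refine this.congr_fun (fun x hx => ?_) measurableSet_Ioi
    norm_num [Real.rpow_one]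
  refine MeasureTheory.IntegrableOn.congr_fun (h1.add h2) (fun x hx => ?_) measurableSet_Ioi
  simp [Pi.add_apply]; ring

lemma intOn_f' (hL : 0 ≤ L) :
    IntegrableOn (fun t : ℝ => Real.log (1 + Real.exp (L - t)) * Real.sqrt t) (Ioi 0) := by
  refine Integrable.mono (intOn_exp_mul0.const_mul (Real.exp L))
    cont_f.aestronglyMeasurable.restrict ?_
  filter_upwards [ae_restrict_mem measurableSet_Ioi] with t ht
  have ht0 : (0:ℝ) ≤ t := le_of_lt ht
  have h1 : 0 ≤ Real.log (1 + Real.exp (L - t)) :=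
    Real.log_nonneg (by linarith [Real.exp_pos (L - t)])
  have h2 : Real.log (1 + Real.exp (L - t)) ≤ Real.exp (L - t) := by
    have := Real.log_le_sub_one_of_pos (x := 1 + Real.exp (L - t)) (by positivity)
    linarith
  rw [Real.norm_of_nonneg (by positivity), Real.norm_of_nonneg (by positivity)]
  calc Real.log (1 + Real.exp (L - t)) * Real.sqrt t
      ≤ Real.exp (L - t) * (1 + t) := by
        apply mul_le_mul h2 (sqrt_le_one_add' t ht0) (Real.sqrt_nonneg t) (Real.exp_pos _).le
    _ = Real.exp L * (Real.exp (-t) * (1 + t)) := by rw [Real.exp_sub, Real.exp_neg]; ring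

lemma intOn_g' (hL : 0 ≤ L) :
    IntegrableOn (fun t : ℝ => max (L - t) 0 * Real.sqrt t) (Ioi 0) := by
  rw [← Ioc_union_Ioi_eq_Ioi hL, integrableOn_union]
  constructor
  · apply Continuous.integrableOn_Ioc
    fun_prop
  · refine MeasureTheory.IntegrableOn.congr_fun (integrableOn_zero) (fun x hx => ?_) measurableSet_Ioi
    rw [max_eq_right (by linarith [hx.out] : L - x ≤ 0), zero_mul]

lemma intOn_bnd' (hL : 0 ≤ L) :
    IntegrableOn (fun t : ℝ => Real.exp (-|t - L|) * (1 + t)) (Ioi 0) := by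
  refine Integrable.mono (intOn_exp_mul0.const_mul (Real.exp L))
    (by fun_prop : Continuous fun t : ℝ => Real.exp (-|t - L|) * (1 + t)).aestronglyMeasurable.restrict ?_
  filter_upwards [ae_restrict_mem measurableSet_Ioi] with t ht
  have ht0 : (0:ℝ) ≤ t := le_of_lt ht
  rw [Real.norm_of_nonneg (by positivity), Real.norm_of_nonneg (by positivity)]
  calc Real.exp (-|t - L|) * (1 + t)
      ≤ Real.exp (L - t) * (1 + t) := by
        apply mul_le_mul_of_nonneg_right _ (by linarith)
        apply Real.exp_le_exp.mpr
        have := le_abs_self (t - L); linarith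
    _ = Real.exp L * (Real.exp (-t) * (1 + t)) := by rw [Real.exp_sub, Real.exp_neg]; ring

end

lemma lemB' {L : ℝ} (hL : 0 ≤ L) :
    ∫ t in (0:ℝ)..L, Real.exp (t - L) * (1 + t) = L := by
  have h : ∫ t in (0:ℝ)..L, Real.exp (t - L) * (1 + t)
      = (fun t : ℝ => Real.exp (t - L) * t) L - (fun t : ℝ => Real.exp (t - L) * t) 0 := by
    apply intervalIntegral.integral_eq_sub_of_hasDerivAt
      (f := fun t : ℝ => Real.exp (t - L) * t) (f' := fun t => Real.exp (t - L) * (1 + t))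
    · intro x hx
      have h1 : HasDerivAt (fun t : ℝ => t - L) 1 x := by
        simpa using (hasDerivAt_id x).sub_const L
      have h2 : HasDerivAt (fun t : ℝ => Real.exp (t - L)) (Real.exp (x - L) * 1) x :=
        (Real.hasDerivAt_exp _).comp x h1
      have := h2.mul (hasDerivAt_id x)
      convert this using 1
      · rfl
      · rfl
      simp; ring
    · apply Continuous.intervalIntegrable; fun_prop
  rw [h]; simp

lemma lemC' {L : ℝ} (hL : 0 ≤ L) :
    ∫ t in Ioi L, Real.exp (L - t) * (1 + t) = 2 + L := by
  have h : ∫ t in Ioi L, Real.exp (L - t) * (1 + t)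
      = 0 - (fun t : ℝ => -(Real.exp (L - t) * (2 + t))) L := by
    apply integral_Ioi_of_hasDerivAt_of_tendsto'
      (f := fun t : ℝ => -(Real.exp (L - t) * (2 + t)))
      (f' := fun t => Real.exp (L - t) * (1 + t))
    · intro x hx
      have h1 : HasDerivAt (fun t : ℝ => L - t) (-1) x := by
        simpa using (hasDerivAt_id x).const_sub L
      have h2 : HasDerivAt (fun t : ℝ => Real.exp (L - t)) (Real.exp (L - x) * (-1)) x :=
        (Real.hasDerivAt_exp _).comp x h1
      have h3 : HasDerivAt (fun t : ℝ => 2 + t) 1 x := by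
        simpa using (hasDerivAt_id x).const_add (2:ℝ)
      have := (h2.mul h3).neg
      convert this using 1
      · rfl
      ring
    · -- IntegrableOn (fun t => exp (L - t) * (1 + t)) (Ioi L)
      have : IntegrableOn (fun t : ℝ => Real.exp L * (Real.exp (-t) * (1 + t))) (Ioi 0) :=
        intOn_exp_mul0.const_mul _
      refine (this.mono_set (Ioi_subset_Ioi hL)).congr_fun (fun x hx => ?_) measurableSet_Ioi
      beta_reduce; rw [Real.exp_sub, Real.exp_neg]; ring
    · -- Tendsto f atTop (nhds 0)
      have h0 : Tendsto (fun t : ℝ => Real.exp (L - t) * (2 + t)) atTop (nhds 0) := by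
        have : (fun t : ℝ => Real.exp (L - t) * (2 + t))
            = fun t : ℝ => Real.exp L * ((2 + t) / Real.exp t) := by
          ext t; rw [Real.exp_sub]; ring
        have h2 : Tendsto (fun t : ℝ => (2 + t) * Real.exp (-t)) atTop (nhds 0) := by
          have ha := tendsto_pow_mul_exp_neg_atTop_nhds_zero 0
          have hb := tendsto_pow_mul_exp_neg_atTop_nhds_zero 1
          have := (ha.const_mul 2).add hb
          simp only [pow_zero, pow_one, one_mul] at this
          simpa [add_mul, mul_assoc, mul_comm, mul_left_comm] using this
        have := h2.const_mul (Real.exp L)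
        rw [mul_zero] at this
        refine this.congr fun t => ?_
        rw [Real.exp_sub, Real.exp_neg]; ring
      simpa using h0.neg
  rw [h]; simp

lemma int_g_eq {L : ℝ} (hL : 0 ≤ L) :
    ∫ t in Ioi (0:ℝ), max (L - t) 0 * Real.sqrt t = 4/15 * (L^2 * Real.sqrt L) := by
  rw [← Ioc_union_Ioi_eq_Ioi hL,
    setIntegral_union (Ioc_disjoint_Ioi le_rfl) measurableSet_Ioi
      ((intOn_g' hL).mono_set (by rw [← Ioc_union_Ioi_eq_Ioi hL]; exact subset_union_left))
      ((intOn_g' hL).mono_set (by rw [← Ioc_union_Ioi_eq_Ioi hL]; exact subset_union_right))]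
  have h2 : ∫ t in Ioi L, max (L - t) 0 * Real.sqrt t = 0 := by
    rw [setIntegral_congr_fun measurableSet_Ioi
      (fun x hx => by rw [max_eq_right (by linarith [hx.out] : L - x ≤ 0), zero_mul])]
    exact integral_zero _ _
  have h1 : ∫ t in Ioc (0:ℝ) L, max (L - t) 0 * Real.sqrt t
      = ∫ t in (0:ℝ)..L, (L - t) * Real.sqrt t := by
    rw [intervalIntegral.integral_of_le hL]
    exact setIntegral_congr_fun measurableSet_Ioc
      (fun x hx => by rw [max_eq_left (by linarith [hx.out.2] : 0 ≤ L - x)])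
  rw [h1, h2, lemA' hL, add_zero]

lemma int_bnd_eq {L : ℝ} (hL : 0 ≤ L) :
    ∫ t in Ioi (0:ℝ), Real.exp (-|t - L|) * (1 + t) = 2*L + 2 := by
  rw [← Ioc_union_Ioi_eq_Ioi hL,
    setIntegral_union (Ioc_disjoint_Ioi le_rfl) measurableSet_Ioi
      ((intOn_bnd' hL).mono_set (by rw [← Ioc_union_Ioi_eq_Ioi hL]; exact subset_union_left))
      ((intOn_bnd' hL).mono_set (by rw [← Ioc_union_Ioi_eq_Ioi hL]; exact subset_union_right))]
  have h1 : ∫ t in Ioc (0:ℝ) L, Real.exp (-|t - L|) * (1 + t) = L := by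
    have e1 : ∫ t in Ioc (0:ℝ) L, Real.exp (-|t - L|) * (1 + t)
        = ∫ t in Ioc (0:ℝ) L, Real.exp (t - L) * (1 + t) := by
      apply setIntegral_congr_fun measurableSet_Ioc
      intro x hx
      have h : |x - L| = -(x - L) := abs_of_nonpos (by linarith [hx.out.2])
      simp only [h, neg_neg]
    rw [e1, ← intervalIntegral.integral_of_le hL, lemB' hL]
  have h2 : ∫ t in Ioi L, Real.exp (-|t - L|) * (1 + t) = 2 + L := by
    have e2 : ∫ t in Ioi L, Real.exp (-|t - L|) * (1 + t)
        = ∫ t in Ioi L, Real.exp (L - t) * (1 + t) := by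
      apply setIntegral_congr_fun measurableSet_Ioi
      intro x hx
      have h : |x - L| = x - L := abs_of_nonneg (by linarith [hx.out])
      simp only [h, neg_sub]
    rw [e2, lemC' hL]
  rw [h1, h2]; ring

lemma lemJ' {L : ℝ} (hL : 0 ≤ L) :
    |(∫ t in Ioi (0:ℝ), Real.log (1 + Real.exp (L - t)) * Real.sqrt t)
      - 4/15 * (L^2 * Real.sqrt L)| ≤ 2*L + 2 := by
  have hr : IntegrableOn
      (fun t : ℝ => (Real.log (1 + Real.exp (L - t)) - max (L - t) 0) * Real.sqrt t) (Ioi 0) := by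
    refine MeasureTheory.IntegrableOn.congr_fun ((intOn_f' hL).sub (intOn_g' hL))
      (fun x hx => by simp only [Pi.sub_apply]; ring) measurableSet_Ioi
  have hsub : (∫ t in Ioi (0:ℝ), Real.log (1 + Real.exp (L - t)) * Real.sqrt t)
      - 4/15 * (L^2 * Real.sqrt L)
      = ∫ t in Ioi (0:ℝ), (Real.log (1 + Real.exp (L - t)) - max (L - t) 0) * Real.sqrt t := by
    rw [← int_g_eq hL, ← integral_sub (intOn_f' hL) (intOn_g' hL)]
    apply setIntegral_congr_fun measurableSet_Ioi
    intro x hx; ring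
  rw [hsub]
  calc |∫ t in Ioi (0:ℝ), (Real.log (1 + Real.exp (L - t)) - max (L - t) 0) * Real.sqrt t|
      ≤ ∫ t in Ioi (0:ℝ), |(Real.log (1 + Real.exp (L - t)) - max (L - t) 0) * Real.sqrt t| := by
        have := norm_integral_le_integral_norm
          (μ := volume.restrict (Ioi (0:ℝ)))
          (fun t => (Real.log (1 + Real.exp (L - t)) - max (L - t) 0) * Real.sqrt t)
        simp only [Real.norm_eq_abs] at this
        exact this
    _ ≤ ∫ t in Ioi (0:ℝ), Real.exp (-|t - L|) * (1 + t) := by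
        apply setIntegral_mono_on hr.abs (intOn_bnd' hL) measurableSet_Ioi
        intro x hx
        have hx0 : (0:ℝ) ≤ x := le_of_lt hx
        have hd := lemD' (L - x)
        rw [abs_mul, abs_of_nonneg hd.1, abs_of_nonneg (Real.sqrt_nonneg x)]
        have habs : |L - x| = |x - L| := abs_sub_comm L x
        calc (Real.log (1 + Real.exp (L - x)) - max (L - x) 0) * Real.sqrt x
            ≤ Real.exp (-|x - L|) * Real.sqrt x := by
              apply mul_le_mul_of_nonneg_right _ (Real.sqrt_nonneg x)
              rw [← habs]; exact hd.2
          _ ≤ Real.exp (-|x - L|) * (1 + x) :=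
              mul_le_mul_of_nonneg_left (sqrt_le_one_add' x hx0) (Real.exp_pos _).le
    _ = 2*L + 2 := int_bnd_eq hL

lemma rpow_52 {L : ℝ} (hL : 0 < L) : L ^ ((5:ℝ)/2) = L^2 * Real.sqrt L := by
  rw [show ((5:ℝ)/2) = 2 + 1/2 by norm_num, Real.rpow_add hL, Real.sqrt_eq_rpow]
  norm_num

lemma err_tendsto : Tendsto (fun L : ℝ => (2*L+2)/L^((5:ℝ)/2)) atTop (nhds 0) := by
  have h1 : Tendsto (fun L : ℝ => 2 * L^(-(3:ℝ)/2) + 2 * L^(-(5:ℝ)/2)) atTop (nhds 0) := by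
    have a1 := (tendsto_rpow_neg_atTop (by norm_num : (0:ℝ) < 3/2)).const_mul (2:ℝ)
    have a2 := (tendsto_rpow_neg_atTop (by norm_num : (0:ℝ) < 5/2)).const_mul (2:ℝ)
    have := a1.add a2
    simp only [mul_zero, add_zero] at this
    convert this using 2 <;> norm_num
  apply h1.congr'
  filter_upwards [eventually_gt_atTop 0] with L hL
  have hP : (0:ℝ) < L^((5:ℝ)/2) := Real.rpow_pos_of_pos hL _
  rw [eq_div_iff hP.ne', add_mul, mul_assoc, mul_assoc, ← Real.rpow_add hL,
    ← Real.rpow_add hL]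
  norm_num

lemma main_tendsto :
    Tendsto (fun L : ℝ => (∫ t in Ioi (0:ℝ), Real.log (1 + Real.exp (L - t)) * Real.sqrt t)
      / L ^ ((5:ℝ)/2)) atTop (nhds (4/15)) := by
  have hlo : Tendsto (fun L : ℝ => 4/15 - (2*L+2)/L^((5:ℝ)/2)) atTop (nhds (4/15)) := by
    simpa using (tendsto_const_nhds (x := (4/15:ℝ))).sub err_tendsto
  have hhi : Tendsto (fun L : ℝ => 4/15 + (2*L+2)/L^((5:ℝ)/2)) atTop (nhds (4/15)) := by
    simpa using (tendsto_const_nhds (x := (4/15:ℝ))).add err_tendsto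
  apply tendsto_of_tendsto_of_tendsto_of_le_of_le' hlo hhi
  · filter_upwards [eventually_gt_atTop 0] with L hL0
    set J := ∫ t in Ioi (0:ℝ), Real.log (1 + Real.exp (L - t)) * Real.sqrt t with hJdef
    have hP : (0:ℝ) < L^((5:ℝ)/2) := Real.rpow_pos_of_pos hL0 _
    have hJ := abs_le.mp (lemJ' hL0.le)
    have e : 4/15 - (2*L+2)/L^((5:ℝ)/2)
        = (4/15 * (L^2 * Real.sqrt L) - (2*L+2))/L^((5:ℝ)/2) := by
      rw [eq_div_iff hP.ne', sub_mul, div_mul_cancel₀ _ hP.ne', rpow_52 hL0]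
    rw [e]
    gcongr
    linarith [hJ.1]
  · filter_upwards [eventually_gt_atTop 0] with L hL0
    set J := ∫ t in Ioi (0:ℝ), Real.log (1 + Real.exp (L - t)) * Real.sqrt t with hJdef
    have hP : (0:ℝ) < L^((5:ℝ)/2) := Real.rpow_pos_of_pos hL0 _
    have hJ := abs_le.mp (lemJ' hL0.le)
    have e : 4/15 + (2*L+2)/L^((5:ℝ)/2)
        = (4/15 * (L^2 * Real.sqrt L) + (2*L+2))/L^((5:ℝ)/2) := by
      rw [eq_div_iff hP.ne', add_mul, div_mul_cancel₀ _ hP.ne', rpow_52 hL0]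
    rw [e]
    gcongr
    linarith [hJ.2]

/-- With ρ(a) = √(-a)/(2π) and Ψ(z) = ∫_{-∞}^0 log(1 + z e^a) ρ(a) da,
one has Ψ(z)/(log z)^{5/2} → 2/(15π) as z → ∞. -/
theorem psi_left_asymptotics :
    Tendsto
      (fun z : ℝ =>
        (∫ a in Iic (0:ℝ), Real.log (1 + z * Real.exp a) * (Real.sqrt (-a) / (2 * π))) /
          (Real.log z) ^ ((5:ℝ)/2))
      atTop (nhds (2 / (15 * π))) := by
  have hcomp := main_tendsto.comp Real.tendsto_log_atTop
  have h2 := hcomp.div_const (2*π)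
  have hval : (4/15 : ℝ)/(2*π) = 2/(15*π) := by
    rw [div_eq_div_iff (by positivity) (by positivity)]
    ring
  rw [hval] at h2
  apply Filter.Tendsto.congr' _ h2
  filter_upwards [eventually_ge_atTop (Real.exp 1)] with z hz
  have hz0 : 0 < z := lt_of_lt_of_le (Real.exp_pos 1) hz
  have key : (∫ a in Iic (0:ℝ), Real.log (1 + z*Real.exp a) * (Real.sqrt (-a)/(2*π)))
      = (∫ t in Ioi (0:ℝ), Real.log (1 + Real.exp (Real.log z - t)) * Real.sqrt t) / (2*π) := by
    have e1 : ∀ a : ℝ, Real.log (1 + z*Real.exp a) * (Real.sqrt (-a)/(2*π))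
        = (Real.log (1 + Real.exp (Real.log z - -a)) * Real.sqrt (-a)) / (2*π) := by
      intro a
      have hza : z * Real.exp a = Real.exp (Real.log z - -a) := by
        rw [sub_neg_eq_add, Real.exp_add, Real.exp_log hz0]
      rw [hza]; ring
    simp only [e1]
    rw [integral_div]
    congr 1
    have hcv := integral_comp_neg_Iic (0:ℝ)
      (fun t => Real.log (1 + Real.exp (Real.log z - t)) * Real.sqrt t)
    rw [neg_zero] at hcv
    rw [hcv]
  show ((∫ t in Ioi (0:ℝ), Real.log (1 + Real.exp (Real.log z - t)) * Real.sqrt t)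
      / (Real.log z) ^ ((5:ℝ)/2)) / (2*π) = _
  rw [key]
  ring
end
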